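/- Let p and q be perfect paths in a monomial algebra Λ such that p overlaps q. Then any nonzero path lying in pΛ ∩ Λq that does not belong to pΛq is itself a perfect path. -/

import Mathlib

/-! Combinatorial model of a monomial algebra `Λ = KQ/I`.

A finite quiver is given by source and target maps on a type of arrows.
A (nontrivial) path is encoded as a nonempty list of composable arrows;
the admissible monomial ideal `I` is encoded by its set `F` of minimal
generating paths, and a path is zero in `Λ` iff it contains a member of
`F` as a contiguous subpath (infix). -/

/-- A quiver structure on arrow type `E` with vertex type `V`. -/
structure QuiverData (V E : Type) where
  src : E → V
  tgt : E → V

namespace QuiverData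

variable {V E : Type} (Q : QuiverData V E)

/-- `l` is the list of arrows of a path of `Q`. -/
def IsPath (l : List E) : Prop := l.Chain' fun a b => Q.tgt a = Q.src b

/-- Two paths are composable: the target of the first equals the source of
the second (vacuously true if one of them is trivial). -/
def Composable (l m : List E) : Prop :=
  ∀ a ∈ l.getLast?, ∀ b ∈ m.head?, Q.tgt a = Q.src b

end QuiverData

/-- A monomial algebra, encoded combinatorially: a finite quiver together with
the set `F` of minimal paths generating the admissible monomial ideal `I`. -/
structure MonomialData (V E : Type) extends QuiverData V E where
  F : Set (List E)
  F_path : ∀ f ∈ F, toQuiverData.IsPath f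
  F_len : ∀ f ∈ F, 2 ≤ f.length
  F_min : ∀ f ∈ F, ∀ g, g <:+: f → (∃ f' ∈ F, f' <:+: g) → g = f
  admissible : ∃ N, ∀ l, toQuiverData.IsPath l → N ≤ l.length → ∃ f ∈ F, f <:+: l

namespace MonomialData

variable {V E : Type} (M : MonomialData V E)

/-- The path `l` is zero in `Λ`. -/
def IsZero (l : List E) : Prop := ∃ f ∈ M.F, f <:+: l

/-- `l` is a path which is nonzero in `Λ`. -/
def Nonzero (l : List E) : Prop := M.toQuiverData.IsPath l ∧ ¬ M.IsZero l

/-- A perfect pair of nonzero nontrivial paths, after Chen–Shen–Zhou. -/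
def PerfectPair (p q : List E) : Prop :=
  p ≠ [] ∧ q ≠ [] ∧ M.Nonzero p ∧ M.Nonzero q ∧
  M.toQuiverData.Composable p q ∧ M.IsZero (p ++ q) ∧
  (∀ q', q' ≠ [] → M.Nonzero q' → M.toQuiverData.Composable p q' →
      M.IsZero (p ++ q') → q <+: q') ∧
  (∀ p', p' ≠ [] → M.Nonzero p' → M.toQuiverData.Composable p' q →
      M.IsZero (p' ++ q) → p <:+ p')

/-- A perfect path: a path appearing in a perfect path sequence
`(p₁, …, pₙ, pₙ₊₁ = p₁)`, encoded by a periodic sequence of paths each of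
whose consecutive pairs is perfect. -/
def IsPerfect (p : List E) : Prop :=
  ∃ (n : ℕ) (s : ℕ → List E), 0 < n ∧ s 0 = p ∧ (∀ i, s (i + n) = s i) ∧
    ∀ i, M.PerfectPair (s i) (s (i + 1))

/-- `c` is the underlying cycle associated with the perfect path `p`:
the shortest cycle `c` with `p₁ ⋯ pₙ = cˡ` for some `l > 0`, for a perfect
path sequence through `p`. -/
def IsUnderlyingCycleOf (c p : List E) : Prop :=
  ∃ (n : ℕ) (s : ℕ → List E), 0 < n ∧ s 0 = p ∧ (∀ i, s (i + n) = s i) ∧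
    (∀ i, M.PerfectPair (s i) (s (i + 1))) ∧
    (∃ l, 0 < l ∧ ((List.range n).map s).flatten = (List.replicate l c).flatten) ∧
    (∀ c' l', 0 < l' → ((List.range n).map s).flatten = (List.replicate l' c').flatten →
      c.length ≤ c'.length)


/-- There is an overlap between the perfect paths `p` and `q` (`p` overlaps `q`). -/
def Overlap (p q : List E) : Prop :=
  ∃ x p' q' : List E, x ≠ [] ∧ p = p' ++ x ∧ q = x ++ q' ∧
    M.Nonzero (p' ++ x ++ q') ∧ (p = q → p' ≠ [] ∧ q' ≠ [])

/-- An elementary perfect path: a source in the Hasse quiver of the left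
divisibility order `⪯` on perfect paths, i.e. it is not a proper left divisor
of any perfect path. -/
def Elementary (p : List E) : Prop :=
  M.IsPerfect p ∧ ¬ ∃ q, M.IsPerfect q ∧ p <+: q ∧ p ≠ q

/-- A co-elementary perfect path: a sink in the Hasse quiver of `⪯`, i.e.
no proper left divisor of it is perfect. -/
def CoElementary (p : List E) : Prop :=
  M.IsPerfect p ∧ ¬ ∃ q, M.IsPerfect q ∧ q <+: p ∧ q ≠ p

/-- There is an arrow `q ⟶ p` in the Hasse quiver of `(ℙ_Λ, ⪯)`:
`p ≺ q` and no perfect path lies strictly between them. -/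
def HasseArrowPrec (q p : List E) : Prop :=
  M.IsPerfect p ∧ M.IsPerfect q ∧ p <+: q ∧ p ≠ q ∧
    ¬ ∃ r, M.IsPerfect r ∧ p <+: r ∧ p ≠ r ∧ r <+: q ∧ r ≠ q

end MonomialData

/-- Two cycles are equivalent (agree up to cyclic permutation): each is a
subpath of a power of the other. -/
def CyclesEquiv {E : Type} (c d : List E) : Prop :=
  ∃ m k, 0 < m ∧ 0 < k ∧ c <:+: (List.replicate m d).flatten ∧
    d <:+: (List.replicate k c).flatten


/-! ### Auxiliary lemmas -/

open List

namespace CSZAux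

variable {V E : Type} {M : MonomialData V E}

/-- Paths: append characterization. -/
lemma path_append_iff {l m : List E} :
    M.toQuiverData.IsPath (l ++ m) ↔
      M.toQuiverData.IsPath l ∧ M.toQuiverData.IsPath m ∧ M.toQuiverData.Composable l m := by
  simp [QuiverData.IsPath, QuiverData.Composable, List.Chain', List.isChain_append]

lemma comp_of_append {l m : List E} (h : M.toQuiverData.IsPath (l ++ m)) :
    M.toQuiverData.Composable l m := (path_append_iff.mp h).2.2

lemma path_of_infix {l m : List E} (h : M.toQuiverData.IsPath m) (hi : l <:+: m) :
    M.toQuiverData.IsPath l := List.IsChain.infix h hi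

lemma zero_of_infix {l m : List E} (h : l <:+: m) (hz : M.IsZero l) : M.IsZero m := by
  obtain ⟨f, hf, hfl⟩ := hz
  exact ⟨f, hf, hfl.trans h⟩

lemma zero_of_mem {f : List E} (hf : f ∈ M.F) : M.IsZero f := ⟨f, hf, List.infix_rfl⟩

lemma nonzero_mono {l m : List E} (hm : M.Nonzero m) (h : l <:+: m) : M.Nonzero l :=
  ⟨path_of_infix hm.1 h, fun hz => hm.2 (zero_of_infix h hz)⟩

lemma F_antichain {f g : List E} (hf : f ∈ M.F) (hg : g ∈ M.F) (h : g <:+: f) : g = f :=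
  M.F_min f hf g h ⟨g, hg, List.infix_rfl⟩

lemma nonzero_of_proper_infix {f g : List E} (hf : f ∈ M.F) (h : g <:+: f)
    (hlen : g.length < f.length) : M.Nonzero g := by
  refine ⟨path_of_infix (M.F_path f hf) h, fun hz => ?_⟩
  have := M.F_min f hf g h hz
  subst this; omega

lemma head?_eq_of_prefix {a b : List E} (h : a <+: b) (ha : a ≠ []) : b.head? = a.head? := by
  obtain ⟨t, rfl⟩ := h
  exact List.head?_append_of_ne_nil _ ha

lemma getLast?_eq_of_suffix {a b : List E} (h : a <:+ b) (ha : a ≠ []) :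
    b.getLast? = a.getLast? := by
  obtain ⟨t, rfl⟩ := h
  exact List.getLast?_append_of_ne_nil _ ha

lemma comp_left {a b c : List E} (h : M.toQuiverData.Composable a b) (hc : c <:+ a)
    (hcne : c ≠ []) : M.toQuiverData.Composable c b := by
  intro x hx y hy
  exact h x (by rw [getLast?_eq_of_suffix hc hcne]; exact hx) y hy

lemma comp_right {a b c : List E} (h : M.toQuiverData.Composable a b) (hc : c <+: b)
    (hcne : c ≠ []) : M.toQuiverData.Composable a c := by
  intro x hx y hy
  exact h x hx y (by rw [head?_eq_of_prefix hc hcne]; exact hy)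

lemma comp_extend_right {a b c : List E} (h : M.toQuiverData.Composable a c) (hc : c <+: b)
    (hcne : c ≠ []) : M.toQuiverData.Composable a b := by
  intro x hx y hy
  exact h x hx y (by rw [← head?_eq_of_prefix hc hcne]; exact hy)

lemma comp_extend_left {a b c : List E} (h : M.toQuiverData.Composable c b) (hc : c <:+ a)
    (hcne : c ≠ []) : M.toQuiverData.Composable a b := by
  intro x hx y hy
  exact h x (by rw [← getLast?_eq_of_suffix hc hcne]; exact hx) y hy

lemma comp_append_left {a b c : List E} (h : M.toQuiverData.Composable b c) (hb : b ≠ []) :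
    M.toQuiverData.Composable (a ++ b) c :=
  comp_extend_left h (List.suffix_append a b) hb

lemma comp_append_right {a b c : List E} (h : M.toQuiverData.Composable a b) (hb : b ≠ []) :
    M.toQuiverData.Composable a (b ++ c) :=
  comp_extend_right h (List.prefix_append b c) hb

/-- A straddling decomposition for an infix of an append which is an infix of
neither part. -/
lemma straddle {α : Type} {f l m : List α} (h : f <:+: l ++ m) (hl : ¬ f <:+: l)
    (hm : ¬ f <:+: m) :
    ∃ a b, a ≠ [] ∧ b ≠ [] ∧ f = a ++ b ∧ a <:+ l ∧ b <+: m := by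
  obtain ⟨s, t, heq⟩ := h
  have heq' : s ++ (f ++ t) = l ++ m := by simpa [List.append_assoc] using heq
  have hlen : s.length + f.length + t.length = l.length + m.length := by
    have := congrArg List.length heq'
    simp at this
    omega
  have htake : l = (s ++ (f ++ t)).take l.length := by rw [heq']; simp
  have hdrop : m = (s ++ (f ++ t)).drop l.length := by rw [heq']; simp
  by_cases h1 : s.length + f.length ≤ l.length
  · exfalso
    apply hl
    rw [List.take_append, List.take_of_length_le (by omega),
      List.take_append, List.take_of_length_le (by omega)] at htake
    exact ⟨s, t.take (l.length - s.length - f.length), by rw [← List.append_assoc] at htake; exact htake.symm⟩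
  · by_cases h2 : l.length ≤ s.length
    · exfalso
      apply hm
      rw [List.drop_append,
        show l.length - s.length = 0 by omega, List.drop_zero] at hdrop
      exact ⟨s.drop l.length, t, by rw [hdrop, List.append_assoc]⟩
    · push_neg at h1 h2
      set n := l.length - s.length with hn
      have hfn : n < f.length := by omega
      have hn1 : 0 < n := by omega
      refine ⟨f.take n, f.drop n, ?_, ?_, (List.take_append_drop _ f).symm, ?_, ?_⟩
      · apply List.ne_nil_of_length_pos
        rw [List.length_take]
        omega
      · apply List.ne_nil_of_length_pos
        rw [List.length_drop]
        omega
      · rw [List.take_append, List.take_of_length_le (by omega),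
          List.take_append,
          show l.length - s.length - f.length = 0 by omega, List.take_zero,
          List.append_nil] at htake
        exact ⟨s, htake.symm⟩
      · rw [List.drop_append, List.drop_of_length_le (by omega),
          List.drop_append,
          show l.length - s.length - f.length = 0 by omega, List.drop_zero,
          List.nil_append] at hdrop
        exact ⟨t, hdrop.symm⟩


/-- A perfect pair concatenates to an element of `F` (Chen–Shen–Zhou). -/
lemma pair_append_mem_F {p q : List E} (h : M.PerfectPair p q) : p ++ q ∈ M.F := by
  obtain ⟨hpne, hqne, hpnz, hqnz, hcomp, hzero, hrmin, hlmin⟩ := h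
  obtain ⟨f, hfF, hfi⟩ := hzero
  have hfl : ¬ f <:+: p := fun hi => hpnz.2 ⟨f, hfF, hi⟩
  have hfr : ¬ f <:+: q := fun hi => hqnz.2 ⟨f, hfF, hi⟩
  obtain ⟨a, b, hane, hbne, hab, hal, hbr⟩ := straddle hfi hfl hfr
  have hqb : q <+: b := by
    refine hrmin b hbne (nonzero_mono hqnz hbr.isInfix) (comp_right hcomp hbr hbne) ?_
    obtain ⟨w, hw⟩ := hal
    exact ⟨f, hfF, ⟨w, [], by rw [hab, List.append_nil, ← List.append_assoc, hw]⟩⟩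
  have hbq : b = q := hbr.eq_of_length_le hqb.length_le
  subst hbq
  have hpa : p <:+ a := by
    refine hlmin a hane (nonzero_mono hpnz hal.isInfix) (comp_left hcomp hal hane) ?_
    exact ⟨f, hfF, by rw [hab]⟩
  have hap : a = p := hal.eq_of_length_le hpa.length_le
  subst hap
  rwa [← hab]

lemma pair_right_unique {a b b' : List E} (h1 : M.PerfectPair a b) (h2 : M.PerfectPair a b') :
    b = b' := by
  obtain ⟨-, hbne, -, hbnz, hcomp, hzero, hrmin, -⟩ := h1
  obtain ⟨-, hbne', -, hbnz', hcomp', hzero', hrmin', -⟩ := h2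
  have p1 : b <+: b' := hrmin b' hbne' hbnz' hcomp' hzero'
  have p2 : b' <+: b := hrmin' b hbne hbnz hcomp hzero
  exact p1.eq_of_length_le p2.length_le

lemma pair_left_unique {a a' b : List E} (h1 : M.PerfectPair a b) (h2 : M.PerfectPair a' b) :
    a = a' := by
  obtain ⟨hane, -, hanz, -, hcomp, hzero, -, hlmin⟩ := h1
  obtain ⟨hane', -, hanz', -, hcomp', hzero', -, hlmin'⟩ := h2
  have p1 : a <:+ a' := hlmin a' hane' hanz' hcomp' hzero'
  have p2 : a' <:+ a := hlmin' a hane hanz hcomp hzero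
  exact (p2.eq_of_length_le p1.length_le).symm

/-- A two-sided-infinite periodic sequence of perfect pairs. -/
def GoodSeq (M : MonomialData V E) (s : ℕ → List E) : Prop :=
  (∃ n, 0 < n ∧ ∀ i, s (i + n) = s i) ∧ ∀ i, M.PerfectPair (s i) (s (i + 1))

lemma goodSeq_perfect {s : ℕ → List E} (hs : GoodSeq M s) (j : ℕ) : M.IsPerfect (s j) := by
  obtain ⟨⟨n, hn, hper⟩, hpp⟩ := hs
  refine ⟨n, fun i => s (i + j), hn, by simp, fun i => ?_, fun i => ?_⟩
  · show s (i + n + j) = s (i + j)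
    rw [show i + n + j = (i + j) + n by omega, hper]
  · show M.PerfectPair (s (i + j)) (s (i + 1 + j))
    rw [show i + 1 + j = (i + j) + 1 by omega]
    exact hpp (i + j)

lemma perfect_of_pair {a b : List E} (h : M.PerfectPair a b) (hb : M.IsPerfect b) :
    M.IsPerfect a := by
  obtain ⟨n, s, hn, h0, hper, hpp⟩ := hb
  have hsn : s n = b := by rw [← h0]; simpa using hper 0
  have hpair : M.PerfectPair (s (n - 1)) b := by
    have := hpp (n - 1)
    rwa [show n - 1 + 1 = n by omega, hsn] at this
  have ha : a = s (n - 1) := pair_left_unique h hpair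
  rw [ha]
  exact goodSeq_perfect ⟨⟨n, hn, hper⟩, hpp⟩ (n - 1)

lemma perfect_goodSeq {p : List E} (hp : M.IsPerfect p) :
    ∃ s : ℕ → List E, GoodSeq M s ∧ s 0 = p := by
  obtain ⟨n, s, hn, h0, hper, hpp⟩ := hp
  exact ⟨s, ⟨⟨n, hn, hper⟩, hpp⟩, h0⟩

lemma periodic_iter {α : Type} {s : ℕ → α} {n : ℕ} (hper : ∀ i, s (i + n) = s i) :
    ∀ t i, s (i + t * n) = s i := by
  intro t
  induction t with
  | zero => simp
  | succ t ih =>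
      intro i
      rw [show i + (t + 1) * n = (i + t * n) + n by ring, hper, ih]

lemma periodic_mod {α : Type} {s : ℕ → α} {n : ℕ} (hn : 0 < n)
    (hper : ∀ i, s (i + n) = s i) : ∀ j, s j = s (j % n) := by
  intro j
  induction j using Nat.strong_induction_on with
  | _ j ih =>
    by_cases h : j < n
    · rw [Nat.mod_eq_of_lt h]
    · push_neg at h
      have e : j - n + n = j := by omega
      conv_lhs => rw [← e, hper, ih (j - n) (by omega)]
      rw [Nat.mod_eq_sub_mod h]

/-- The invariant: `μ` is a nonzero path properly overlapping the `2k`-th terms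
of the two perfect path sequences. -/
def InvAt (M : MonomialData V E) (sp sq : ℕ → List E) (k : ℕ) (μ : List E) : Prop :=
  M.Nonzero μ ∧ sp (2*k) <+: μ ∧ sq (2*k) <:+ μ ∧
  μ.length < (sp (2*k)).length + (sq (2*k)).length ∧
  (sp (2*k)).length < μ.length ∧ (sq (2*k)).length < μ.length

/-- The C1 step: a middle overlapping path has a perfect successor. -/
lemma c1 {sp sq : ℕ → List E} (hsp : GoodSeq M sp) (hsq : GoodSeq M sq) (k : ℕ)
    {μ : List E} (hI : InvAt M sp sq k μ) :
    ∃ d ν, sp (2*k) ++ d = μ ∧ d ≠ [] ∧ d ++ ν = sp (2*k+1) ∧ ν ≠ [] ∧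
      ν <+: sq (2*k+1) ∧ M.PerfectPair μ ν := by
  obtain ⟨hnz, hPμ, hQμ, hlt, hPlt, hQlt⟩ := hI
  have FPA : sp (2*k) ++ sp (2*k+1) ∈ M.F := pair_append_mem_F (hsp.2 (2*k))
  have FQB : sq (2*k) ++ sq (2*k+1) ∈ M.F := pair_append_mem_F (hsq.2 (2*k))
  set P := sp (2*k) with hPdef
  set A := sp (2*k+1) with hAdef
  set Q := sq (2*k) with hQdef
  set B := sq (2*k+1) with hBdef
  obtain ⟨hPne, hAne, hPnz, hAnz, hPAc, hPAz, hPAr, hPAl⟩ := hsp.2 (2*k)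
  obtain ⟨hQne, hBne, hQnz, hBnz, hQBc, hQBz, hQBr, hQBl⟩ := hsq.2 (2*k)
  obtain ⟨d, hd⟩ := hPμ
  obtain ⟨c, hc⟩ := hQμ
  have hdlen : P.length + d.length = μ.length := by rw [← hd]; simp
  have hQBlen : Q.length + B.length = (Q ++ B).length := by simp
  have hdne : d ≠ [] := by
    intro h
    rw [h] at hdlen
    simp at hdlen
    omega
  have hdpos : 0 < d.length := List.length_pos_iff.mpr hdne
  have hdQ : d <:+ Q := List.suffix_of_suffix_length_le ⟨P, hd⟩ ⟨c, hc⟩ (by omega)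
  obtain ⟨xt, hxt⟩ := hdQ
  have hxtlen : xt.length + d.length = Q.length := by rw [← hxt]; simp
  have hxtne : xt ≠ [] := by
    intro h
    rw [h] at hxtlen
    simp at hxtlen
    omega
  have hxtpos : 0 < xt.length := List.length_pos_iff.mpr hxtne
  have hμpath : M.toQuiverData.IsPath μ := hnz.1
  have hPd : M.toQuiverData.Composable P d := comp_of_append (by rw [hd]; exact hμpath)
  -- (i) : A <+: d ++ B
  have hdB_inf : d ++ B <:+: Q ++ B := ⟨xt, [], by rw [List.append_nil, ← List.append_assoc, hxt]⟩
  have hdB_nz : M.Nonzero (d ++ B) := by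
    refine nonzero_of_proper_infix FQB hdB_inf ?_
    simp only [List.length_append]
    omega
  have hzPdB : M.IsZero (P ++ (d ++ B)) := by
    have e : P ++ (d ++ B) = c ++ (Q ++ B) := by
      rw [← List.append_assoc, hd, ← hc, List.append_assoc]
    rw [e]
    exact zero_of_infix ⟨c, [], by simp⟩ (zero_of_mem FQB)
  have hdBne : d ++ B ≠ [] := fun h => hdne (by cases d <;> simp_all)
  have hAdB : A <+: d ++ B :=
    hPAr _ hdBne hdB_nz (comp_append_right hPd hdne) hzPdB
  -- (ii) : d.length < A.length
  have hdA_lt : d.length < A.length := by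
    by_contra hcon
    push_neg at hcon
    have hAd : A <+: d := List.prefix_of_prefix_length_le hAdB (List.prefix_append d B) hcon
    obtain ⟨d', hd'⟩ := hAd
    refine hnz.2 ⟨P ++ A, FPA, ⟨[], d', ?_⟩⟩
    rw [List.nil_append, List.append_assoc, hd', hd]
  have hdA : d <+: A :=
    List.prefix_of_prefix_length_le (List.prefix_append d B) hAdB (by omega)
  obtain ⟨ν, hν⟩ := hdA
  have hνlen : d.length + ν.length = A.length := by rw [← hν]; simp
  have hνne : ν ≠ [] := by
    intro h
    rw [h] at hνlen
    simp at hνlen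
    omega
  have hνB : ν <+: B := (List.prefix_append_right_inj d).mp (by rw [hν]; exact hAdB)
  have hνA : ν <:+ A := ⟨d, hν⟩
  refine ⟨d, ν, hd, hdne, hν, hνne, hνB, ?_⟩
  have hμne : μ ≠ [] := by
    have : 0 < P.length := List.length_pos_iff.mpr hPne
    exact List.ne_nil_of_length_pos (by omega)
  have hcompμν : M.toQuiverData.Composable μ ν := by
    rw [← hd]
    exact comp_append_left (comp_of_append (by rw [hν]; exact hAnz.1)) hdne
  have hzμν : M.IsZero (μ ++ ν) := by
    have e : μ ++ ν = P ++ A := by rw [← hd, ← hν, List.append_assoc]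
    rw [e]
    exact zero_of_mem FPA
  refine ⟨hμne, hνne, hnz, nonzero_mono hAnz hνA.isInfix, hcompμν, hzμν, ?_, ?_⟩
  · -- right minimality
    intro z hzne hznz hzc hzz
    by_cases hdz : M.IsZero (d ++ z)
    · have hQz : M.IsZero (Q ++ z) :=
        zero_of_infix ⟨xt, [], by rw [List.append_nil, ← List.append_assoc, hxt]⟩ hdz
      have hBz : B <+: z := hQBr z hzne hznz (comp_left hzc ⟨c, hc⟩ hQne) hQz
      exact hνB.trans hBz
    · have hdpath : M.toQuiverData.IsPath d := path_of_infix hμpath ⟨P, [], by simp [hd]⟩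
      have hnzdz : M.Nonzero (d ++ z) := by
        refine ⟨path_append_iff.mpr ⟨hdpath, hznz.1, comp_left hzc ⟨P, hd⟩ hdne⟩, hdz⟩
      have hzPdz : M.IsZero (P ++ (d ++ z)) := by
        rw [← List.append_assoc, hd]
        exact hzz
      have hA : A <+: d ++ z :=
        hPAr _ (fun h => hdne (by cases d <;> simp_all)) hnzdz
          (comp_append_right hPd hdne) hzPdz
      exact (List.prefix_append_right_inj d).mp (by rw [hν]; exact hA)
  · -- left minimality
    intro y hyne hynz hyc hyz
    obtain ⟨g2, hg2⟩ := id hνB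
    have hyB : M.IsZero (y ++ B) := by
      refine zero_of_infix ?_ hyz
      exact ⟨[], g2, by rw [List.nil_append, List.append_assoc, hg2]⟩
    have hQy : Q <:+ y := hQBl y hyne hynz (comp_extend_right hyc hνB hνne) hyB
    obtain ⟨y0, hy0⟩ := hQy
    have hkey : M.IsZero ((y0 ++ xt) ++ A) := by
      have e : (y0 ++ xt) ++ A = y ++ ν := by
        rw [← hν, ← hy0, ← hxt]
        simp [List.append_assoc]
      rw [e]
      exact hyz
    have hy0xt_pre : (y0 ++ xt) ++ d = y := by
      rw [List.append_assoc, hxt, hy0]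
    have hnzy0xt : M.Nonzero (y0 ++ xt) :=
      nonzero_mono hynz ⟨[], d, by rw [List.nil_append, hy0xt_pre]⟩
    have hy0xtne : y0 ++ xt ≠ [] := fun h => hxtne (List.append_eq_nil_iff.mp h).2
    have hcompxtd : M.toQuiverData.Composable xt d :=
      comp_of_append (by rw [hxt]; exact hQnz.1)
    have hcompyA : M.toQuiverData.Composable (y0 ++ xt) A :=
      comp_append_left (comp_extend_right hcompxtd ⟨ν, hν⟩ hdne) hxtne
    have hPy : P <:+ y0 ++ xt := hPAl _ hy0xtne hnzy0xt hcompyA hkey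
    obtain ⟨w, hw⟩ := hPy
    exact ⟨w, by rw [← hd, ← List.append_assoc, hw, hy0xt_pre]⟩

/-- The C2 step: the successor `ν` itself has a perfect successor, which either
is a chain element (so perfect) or satisfies the invariant at level `k+1`. -/
lemma c2 {sp sq : ℕ → List E} (hsp : GoodSeq M sp) (hsq : GoodSeq M sq) (k : ℕ)
    {μ d ν : List E} (hI : InvAt M sp sq k μ)
    (hd : sp (2*k) ++ d = μ) (hdne : d ≠ [])
    (hν : d ++ ν = sp (2*k+1)) (hνne : ν ≠ [])
    (hνB : ν <+: sq (2*k+1)) :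
    M.IsPerfect ν ∨
      ∃ μ', M.PerfectPair ν μ' ∧ (M.IsPerfect μ' ∨ InvAt M sp sq (k+1) μ') := by
  obtain ⟨hnz, hPμ, hQμ, hlt, hPlt, hQlt⟩ := hI
  have e21 : 2*k+1+1 = 2*k+2 := by omega
  have e22 : 2*(k+1) = 2*k+2 := by omega
  have hAP2 := hsp.2 (2*k+1)
  rw [e21] at hAP2
  have hBQ2 := hsq.2 (2*k+1)
  rw [e21] at hBQ2
  have FAP2 : sp (2*k+1) ++ sp (2*k+2) ∈ M.F := pair_append_mem_F hAP2
  have FBQ2 : sq (2*k+1) ++ sq (2*k+2) ∈ M.F := pair_append_mem_F hBQ2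
  have FQB : sq (2*k) ++ sq (2*k+1) ∈ M.F := pair_append_mem_F (hsq.2 (2*k))
  set P := sp (2*k) with hPdef
  set A := sp (2*k+1) with hAdef
  set P2 := sp (2*k+2) with hP2def
  set Q := sq (2*k) with hQdef
  set B := sq (2*k+1) with hBdef
  set Q2 := sq (2*k+2) with hQ2def
  obtain ⟨hAne, hP2ne, hAnz, hP2nz, hAP2c, hAP2z, hAP2r, hAP2l⟩ := hAP2
  obtain ⟨hBne, hQ2ne, hBnz, hQ2nz, hBQ2c, hBQ2z, hBQ2r, hBQ2l⟩ := hBQ2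
  obtain ⟨hQne, hBne2, hQnz, hBnz2, -, -, -, -⟩ := hsq.2 (2*k)
  obtain ⟨v, hv⟩ := hνB
  by_cases hvne : v = []
  · left
    rw [hvne, List.append_nil] at hv
    rw [hv]
    exact goodSeq_perfect hsq (2*k+1)
  · have hνA : ν <:+ A := ⟨d, hν⟩
    have hνnz : M.Nonzero ν := nonzero_mono hAnz hνA.isInfix
    have hdlen : P.length + d.length = μ.length := by rw [← hd]; simp
    obtain ⟨c, hc⟩ := hQμ
    have hdQ : d <:+ Q := List.suffix_of_suffix_length_le ⟨P, hd⟩ ⟨c, hc⟩ (by omega)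
    obtain ⟨xt, hxt⟩ := hdQ
    have hxtlen : xt.length + d.length = Q.length := by rw [← hxt]; simp
    have hxtne : xt ≠ [] := by
      intro h
      rw [h] at hxtlen
      simp at hxtlen
      omega
    have hxtpos : 0 < xt.length := List.length_pos_iff.mpr hxtne
    have hνlen : d.length + ν.length = A.length := by rw [← hν]; simp
    have hvlen : ν.length + v.length = B.length := by rw [← hv]; simp
    have hνpos : 0 < ν.length := List.length_pos_iff.mpr hνne
    have hvpos : 0 < v.length := List.length_pos_iff.mpr hvne
    have hdpos : 0 < d.length := List.length_pos_iff.mpr hdne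
    have hvQ2_inf : v ++ Q2 <:+: B ++ Q2 :=
      ⟨ν, [], by rw [List.append_nil, ← List.append_assoc, hv]⟩
    have hnzvQ2 : M.Nonzero (v ++ Q2) := by
      refine nonzero_of_proper_infix FBQ2 hvQ2_inf ?_
      simp only [List.length_append]
      omega
    have hzAvQ2 : M.IsZero (A ++ (v ++ Q2)) := by
      have e : A ++ (v ++ Q2) = d ++ (B ++ Q2) := by
        rw [← hν, ← hv]
        simp [List.append_assoc]
      rw [e]
      exact zero_of_infix ⟨d, [], by simp⟩ (zero_of_mem FBQ2)
    have hcompνv : M.toQuiverData.Composable ν v :=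
      comp_of_append (by rw [hv]; exact hBnz.1)
    have hcompAv : M.toQuiverData.Composable A v := by
      rw [← hν]
      exact comp_append_left hcompνv hνne
    have hcompAvQ2 : M.toQuiverData.Composable A (v ++ Q2) :=
      comp_append_right hcompAv hvne
    have hP2 : P2 <+: v ++ Q2 :=
      hAP2r _ (fun h => hvne (List.append_eq_nil_iff.mp h).1) hnzvQ2 hcompAvQ2 hzAvQ2
    have hvP2_lt : v.length < P2.length := by
      by_contra hcon
      push_neg at hcon
      have hP2v : P2 <+: v :=
        List.prefix_of_prefix_length_le hP2 (List.prefix_append v Q2) hcon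
      obtain ⟨w, hw⟩ := hP2v
      have hinf : A ++ P2 <:+: Q ++ B := by
        refine ⟨xt, w, ?_⟩
        rw [← hν, ← hv, ← hxt, ← hw]
        simp [List.append_assoc]
      have heq := F_antichain FQB FAP2 hinf
      have hlen := congrArg List.length heq
      simp only [List.length_append] at hlen
      omega
    have hvpre : v <+: P2 :=
      List.prefix_of_prefix_length_le (List.prefix_append v Q2) hP2 (le_of_lt hvP2_lt)
    obtain ⟨e2, he2⟩ := hvpre
    have he2len : v.length + e2.length = P2.length := by rw [← he2]; simp
    have he2ne : e2 ≠ [] := by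
      intro h
      rw [h] at he2len
      simp at he2len
      omega
    have hvpre' : v <+: P2 := ⟨e2, he2⟩
    have hpair : M.PerfectPair ν (v ++ Q2) := by
      refine ⟨hνne, fun h => hvne (List.append_eq_nil_iff.mp h).1, hνnz, hnzvQ2,
        comp_append_right hcompνv hvne, ?_, ?_, ?_⟩
      · have e : ν ++ (v ++ Q2) = B ++ Q2 := by rw [← hv, List.append_assoc]
        rw [e]
        exact zero_of_mem FBQ2
      · -- right minimality
        intro z hzne hznz hzc hzz
        have hzA : M.IsZero (A ++ z) := by
          have e : A ++ z = d ++ (ν ++ z) := by rw [← hν, List.append_assoc]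
          rw [e]
          exact zero_of_infix ⟨d, [], by simp⟩ hzz
        have hcompAz : M.toQuiverData.Composable A z := by
          rw [← hν]
          exact comp_append_left hzc hνne
        have hP2z : P2 <+: z := hAP2r z hzne hznz hcompAz hzA
        have hvz : v <+: z := hvpre'.trans hP2z
        obtain ⟨z4, hz4⟩ := hvz
        have hz4len : v.length + z4.length = z.length := by rw [← hz4]; simp
        have hz4ne : z4 ≠ [] := by
          have := hP2z.length_le
          intro h
          rw [h] at hz4len
          simp at hz4len
          omega
        have hzB : M.IsZero (B ++ z4) := by
          have e : B ++ z4 = ν ++ z := by rw [← hv, ← hz4, List.append_assoc]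
          rw [e]
          exact hzz
        have hcompBz4 : M.toQuiverData.Composable B z4 := by
          rw [← hv]
          refine comp_append_left ?_ hvne
          exact comp_of_append (by rw [hz4]; exact hznz.1)
        have hQ2z4 : Q2 <+: z4 :=
          hBQ2r z4 hz4ne (nonzero_mono hznz ⟨v, [], by rw [List.append_nil, hz4]⟩)
            hcompBz4 hzB
        have : v ++ Q2 <+: v ++ z4 := (List.prefix_append_right_inj v).mpr hQ2z4
        rwa [hz4] at this
      · -- left minimality
        intro y hyne hynz hyc hyz
        by_cases hyv : M.IsZero (y ++ v)
        · have hyP2 : M.IsZero (y ++ P2) := by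
            have e : y ++ P2 = (y ++ v) ++ e2 := by rw [List.append_assoc, he2]
            rw [e]
            exact zero_of_infix ⟨[], e2, by simp⟩ hyv
          have hcompyP2 : M.toQuiverData.Composable y P2 :=
            comp_extend_right (comp_right hyc (List.prefix_append v Q2) hvne) hvpre' hvne
          have hAy : A <:+ y := hAP2l y hyne hynz hcompyP2 hyP2
          exact hνA.trans hAy
        · have hvpath : M.toQuiverData.IsPath v :=
            path_of_infix hBnz.1 ⟨ν, [], by rw [List.append_nil, hv]⟩
          have hnzyv : M.Nonzero (y ++ v) :=
            ⟨path_append_iff.mpr ⟨hynz.1, hvpath,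
              comp_right hyc (List.prefix_append v Q2) hvne⟩, hyv⟩
          have hzyvQ2 : M.IsZero ((y ++ v) ++ Q2) := by
            rw [List.append_assoc]
            exact hyz
          have hcompyvQ2 : M.toQuiverData.Composable (y ++ v) Q2 :=
            comp_append_left (comp_left hBQ2c ⟨ν, hv⟩ hvne) hvne
          have hBy : B <:+ y ++ v :=
            hBQ2l (y ++ v) (fun h => hvne (List.append_eq_nil_iff.mp h).2) hnzyv
              hcompyvQ2 hzyvQ2
          obtain ⟨t, ht⟩ := hBy
          refine ⟨t, ?_⟩
          have e : (t ++ ν) ++ v = y ++ v := by rw [List.append_assoc, hv, ht]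
          exact List.append_cancel_right e
    right
    refine ⟨v ++ Q2, hpair, ?_⟩
    by_cases hdeg : (v ++ Q2).length = P2.length
    · left
      have e : P2 = v ++ Q2 := hP2.eq_of_length hdeg.symm
      rw [← e, hP2def]
      exact goodSeq_perfect hsp (2*k+2)
    · right
      unfold InvAt
      rw [e22, ← hP2def, ← hQ2def]
      have hle := hP2.length_le
      refine ⟨hnzvQ2, hP2, List.suffix_append v Q2, ?_, ?_, ?_⟩ <;>
        simp only [List.length_append] <;>
        simp only [List.length_append] at hdeg hle <;> omega

lemma step {sp sq : ℕ → List E} (hsp : GoodSeq M sp) (hsq : GoodSeq M sq) (k : ℕ)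
    {μ : List E} (hI : InvAt M sp sq k μ) :
    M.IsPerfect μ ∨
      ∃ μ', (∃ ν, M.PerfectPair μ ν ∧ M.PerfectPair ν μ') ∧ InvAt M sp sq (k+1) μ' := by
  obtain ⟨d, ν, hd, hdne, hν, hνne, hνB, hpair1⟩ := c1 hsp hsq k hI
  rcases c2 hsp hsq k hI hd hdne hν hνne hνB with hperf | ⟨μ', hpair2, hrest⟩
  · exact Or.inl (perfect_of_pair hpair1 hperf)
  · rcases hrest with hperf' | hInv'
    · exact Or.inl (perfect_of_pair hpair1 (perfect_of_pair hpair2 hperf'))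
    · exact Or.inr ⟨μ', ⟨ν, hpair1, hpair2⟩, hInv'⟩

/-- The invariant determines the path from its length. -/
lemma recon {sp sq : ℕ → List E} (hsp : GoodSeq M sp) (hsq : GoodSeq M sq) (k : ℕ)
    {μ : List E} (hI : InvAt M sp sq k μ) :
    μ = sp (2*k) ++ (sp (2*k+1)).take (μ.length - (sp (2*k)).length) := by
  obtain ⟨d, ν, hd, hdne, hν, hνne, hνB, -⟩ := c1 hsp hsq k hI
  have hdpre : d <+: sp (2*k+1) := ⟨ν, hν⟩
  have hdlen : (sp (2*k)).length + d.length = μ.length := by rw [← hd]; simp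
  rw [show μ.length - (sp (2*k)).length = d.length by omega, ← hd]
  congr 1
  exact List.prefix_iff_eq_take.mp hdpre

open Classical in
noncomputable def nextMid (M : MonomialData V E) (μ : List E) : List E :=
  if h : ∃ μ', ∃ ν, M.PerfectPair μ ν ∧ M.PerfectPair ν μ' then h.choose else []

noncomputable def chainSeq (M : MonomialData V E) (r : List E) : ℕ → List E
  | 0 => r
  | (k+1) => nextMid M (chainSeq M r k)

lemma nextMid_eq {μ μ' : List E} (h : ∃ ν, M.PerfectPair μ ν ∧ M.PerfectPair ν μ') :
    nextMid M μ = μ' := by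
  have hex : ∃ μ'', ∃ ν, M.PerfectPair μ ν ∧ M.PerfectPair ν μ'' := ⟨μ', h⟩
  unfold nextMid
  rw [dif_pos hex]
  obtain ⟨ν1, h1, h2⟩ := hex.choose_spec
  obtain ⟨ν2, h3, h4⟩ := h
  have hν : ν1 = ν2 := pair_right_unique h1 h3
  subst hν
  exact pair_right_unique h2 h4

lemma back {m : ℕ → List E} (k : ℕ)
    (hchain : ∀ i < k, ∃ ν, M.PerfectPair (m i) ν ∧ M.PerfectPair ν (m (i+1)))
    (hperf : M.IsPerfect (m k)) : M.IsPerfect (m 0) := by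
  induction k with
  | zero => exact hperf
  | succ k ih =>
      refine ih (fun i hi => hchain i (by omega)) ?_
      obtain ⟨ν, h1, h2⟩ := hchain k (by omega)
      exact perfect_of_pair h1 (perfect_of_pair h2 hperf)

lemma main_aux {sp sq : ℕ → List E} (hsp : GoodSeq M sp) (hsq : GoodSeq M sq)
    {r : List E} (hI0 : InvAt M sp sq 0 r) : M.IsPerfect r := by
  by_contra hcon
  set m := chainSeq M r with hm
  have key : ∀ k, InvAt M sp sq k (m k) ∧
      (∀ i < k, ∃ ν, M.PerfectPair (m i) ν ∧ M.PerfectPair ν (m (i+1))) := by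
    intro k
    induction k with
    | zero => exact ⟨hI0, fun i hi => absurd hi (Nat.not_lt_zero i)⟩
    | succ k ih =>
        obtain ⟨hIk, hch⟩ := ih
        rcases step hsp hsq k hIk with hperf | ⟨μ', hR, hI'⟩
        · exact absurd (back k hch hperf) hcon
        · have hnext : m (k+1) = μ' := nextMid_eq hR
          refine ⟨by rw [hnext]; exact hI', fun i hi => ?_⟩
          rcases Nat.lt_succ_iff_lt_or_eq.mp hi with h | h
          · exact hch i h
          · subst h
            rw [hnext]
            exact hR
  have hRall : ∀ i, ∃ ν, M.PerfectPair (m i) ν ∧ M.PerfectPair ν (m (i+1)) :=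
    fun i => (key (i+1)).2 i (by omega)
  obtain ⟨np, hnp, hperp⟩ := hsp.1
  obtain ⟨nq, hnq, hperq⟩ := hsq.1
  set L := np * nq with hL
  have hLpos : 0 < L := Nat.mul_pos hnp hnq
  set Bp := (Finset.range np).sup (fun j => (sp j).length) with hBp
  set Bq := (Finset.range nq).sup (fun j => (sq j).length) with hBq
  have hpb : ∀ j, (sp j).length ≤ Bp := fun j => by
    rw [periodic_mod hnp hperp j]
    exact Finset.le_sup (f := fun j => (sp j).length) (Finset.mem_range.mpr (Nat.mod_lt _ hnp))
  have hqb : ∀ j, (sq j).length ≤ Bq := fun j => by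
    rw [periodic_mod hnq hperq j]
    exact Finset.le_sup (f := fun j => (sq j).length) (Finset.mem_range.mpr (Nat.mod_lt _ hnq))
  have hmb : ∀ k, (m k).length < Bp + Bq + 1 := by
    intro k
    have h4 := (key k).1.2.2.2.1
    have := hpb (2*k)
    have := hqb (2*k)
    omega
  obtain ⟨k1, k2, hne, hfeq⟩ :=
    Finite.exists_ne_map_eq_of_infinite
      (fun k => ((⟨k % L, Nat.mod_lt _ hLpos⟩ : Fin L),
        (⟨(m k).length, hmb k⟩ : Fin (Bp + Bq + 1))))
  have hmod : k1 % L = k2 % L := congrArg (fun x => (x.1 : ℕ)) hfeq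
  have hlen : (m k1).length = (m k2).length := congrArg (fun x => (x.2 : ℕ)) hfeq
  have main : ∀ a b : ℕ, a < b → a % L = b % L → (m a).length = (m b).length → False := by
    intro a b hab hmodab hlenab
    have hdvd : L ∣ b - a := (Nat.modEq_iff_dvd' (le_of_lt hab)).mp hmodab
    obtain ⟨t, ht⟩ := hdvd
    have hb : b = a + L * t := by omega
    have hsp2 : sp (2*b) = sp (2*a) := by
      rw [show 2*b = 2*a + (2*t*nq)*np by rw [hb, hL]; ring]
      exact periodic_iter hperp _ _
    have hsp2' : sp (2*b+1) = sp (2*a+1) := by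
      rw [show 2*b+1 = (2*a+1) + (2*t*nq)*np by rw [hb, hL]; ring]
      exact periodic_iter hperp _ _
    have ra := recon hsp hsq a (key a).1
    have rb := recon hsp hsq b (key b).1
    rw [hsp2, hsp2', ← hlenab] at rb
    have hmeq : m a = m b := by rw [ra, rb]
    set D := b - a with hD
    have hDpos : 0 < D := by omega
    obtain ⟨νf, hνfs⟩ : ∃ f : ℕ → List E,
        ∀ i, M.PerfectPair (m i) (f i) ∧ M.PerfectPair (f i) (m (i+1)) :=
      ⟨fun i => (hRall i).choose, fun i => (hRall i).choose_spec⟩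
    set w : ℕ → List E :=
      (fun j => if 2 ∣ j then m (a + j/2) else νf (a + j/2)) with hw
    have hpairs : ∀ j < 2*D, M.PerfectPair (w j) (w ((j+1) % (2*D))) := by
      intro j hjlt
      rcases Nat.even_or_odd j with ⟨c, hc⟩ | ⟨c, hc⟩
      · have hj2 : 2 ∣ j := ⟨c, by omega⟩
        have hdiv : j / 2 = c := by omega
        have hj1lt : j + 1 < 2*D := by omega
        have hnd : ¬ 2 ∣ (j+1) := by omega
        have hdiv2 : (j+1)/2 = c := by omega
        rw [Nat.mod_eq_of_lt hj1lt]
        simp only [hw, if_pos hj2, if_neg hnd, hdiv, hdiv2]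
        exact (hνfs (a + c)).1
      · have hnd : ¬ 2 ∣ j := by omega
        have hdiv : j / 2 = c := by omega
        have hd2 : 2 ∣ (j+1) := by omega
        by_cases hwrap : j + 1 = 2*D
        · rw [hwrap, Nat.mod_self]
          simp only [hw, if_neg hnd, if_pos (⟨0, rfl⟩ : (2:ℕ) ∣ 0), hdiv,
            Nat.zero_div, Nat.add_zero]
          have hspec := (hνfs (a + c)).2
          have hme : m (a + c + 1) = m a := by
            rw [show a + c + 1 = b by omega, ← hmeq]
          rwa [hme] at hspec
        · have hj1lt : j + 1 < 2*D := by omega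
          have hdiv2 : (j+1)/2 = c + 1 := by omega
          rw [Nat.mod_eq_of_lt hj1lt]
          simp only [hw, if_neg hnd, if_pos hd2, hdiv, hdiv2]
          rw [show a + (c+1) = a + c + 1 by omega]
          exact (hνfs (a + c)).2
    have hcyc : M.IsPerfect (m a) := by
      refine ⟨2*D, fun i => w (i % (2*D)), by omega, ?_, ?_, ?_⟩
      · show w (0 % (2*D)) = m a
        rw [Nat.zero_mod]
        simp only [hw, if_pos (⟨0, rfl⟩ : (2:ℕ) ∣ 0)]
        norm_num
      · intro i
        show w ((i + 2*D) % (2*D)) = w (i % (2*D))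
        rw [Nat.add_mod_right]
      · intro i
        show M.PerfectPair (w (i % (2*D))) (w ((i+1) % (2*D)))
        have hjlt : i % (2*D) < 2*D := Nat.mod_lt _ (by omega)
        have hstep : (i+1) % (2*D) = ((i % (2*D)) + 1) % (2*D) := by
          conv_lhs => rw [Nat.add_mod]
          rw [Nat.mod_eq_of_lt (show (1:ℕ) < 2*D by omega)]
        rw [hstep]
        exact hpairs _ hjlt
    exact hcon (back a (fun i _ => hRall i) hcyc)
  rcases hne.lt_or_gt with h | h
  · exact main k1 k2 h hmod hlen
  · exact main k2 k1 h hmod.symm hlen.symm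
end CSZAux

/-- if the perfect path `p` overlaps the perfect path `q`, then
any nonzero path lying in `pΛ ∩ Λq` (i.e. having `p` as a left divisor and
`q` as a right divisor) that does not lie in `pΛq` is itself perfect. -/
theorem mem_inter_not_mem_perfect {V E : Type} (M : MonomialData V E)
    (p q r : List E) (hp : M.IsPerfect p) (hq : M.IsPerfect q)
    (hov : M.Overlap p q) (hr : M.Nonzero r)
    (h1 : p <+: r) (h2 : q <:+ r) (h3 : ¬ ∃ w, r = p ++ w ++ q) :
    M.IsPerfect r := by
  classical
  by_cases hrp : r = p
  · rwa [hrp]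
  by_cases hrq : r = q
  · rwa [hrq]
  obtain ⟨sp, hsp, hsp0⟩ := CSZAux.perfect_goodSeq hp
  obtain ⟨sq, hsq, hsq0⟩ := CSZAux.perfect_goodSeq hq
  apply CSZAux.main_aux hsp hsq
  have hplt : p.length < r.length := by
    have hle := h1.length_le
    rcases eq_or_lt_of_le hle with he | hlt
    · exact absurd (h1.eq_of_length he).symm hrp
    · exact hlt
  have hqlt : q.length < r.length := by
    have hle := h2.length_le
    rcases eq_or_lt_of_le hle with he | hlt
    · exact absurd (h2.eq_of_length he).symm hrq
    · exact hlt
  have hsum : r.length < p.length + q.length := by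
    by_contra hcon
    push_neg at hcon
    apply h3
    obtain ⟨dr, hdr⟩ := h1
    have hdrlen : p.length + dr.length = r.length := by rw [← hdr]; simp
    have hqdr : q <:+ dr :=
      List.suffix_of_suffix_length_le h2 ⟨p, hdr⟩ (by omega)
    obtain ⟨w', hw'⟩ := hqdr
    exact ⟨w', by rw [← hdr, ← hw', List.append_assoc]⟩
  unfold CSZAux.InvAt
  rw [Nat.mul_zero, hsp0, hsq0]
  exact ⟨hr, h1, h2, hsum, hplt, hqlt⟩
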